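/- Let n be a natural number and let Hₙ be the n-th physicists' Hermite polynomial, defined recursively by H₀(q) = 1 and H_{n+1}(q) = 2q·Hₙ(q) − Hₙ'(q). Then ∫_ℝ exp(−q²)·Hₙ(q)² dq = 2ⁿ·n!·√π. -/

import Mathlib

open Real

/-- The physicists' Hermite polynomials: H₀(q) = 1, H_{n+1}(q) = 2q·Hₙ(q) − Hₙ'(q). -/
noncomputable def physHermite : ℕ → ℝ → ℝ
  | 0 => fun _ => 1
  | n + 1 => fun q => 2 * q * physHermite n q - deriv (physHermite n) q

open Polynomial MeasureTheory

/-- Polynomial version of the physicists' Hermite polynomials. -/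
noncomputable def physP : ℕ → Polynomial ℝ
  | 0 => 1
  | n + 1 => C 2 * X * physP n - derivative (physP n)

lemma physHermite_eq (n : ℕ) : physHermite n = fun x => aeval x (physP n) := by
  induction n with
  | zero => funext x; simp [physHermite, physP]
  | succ n ih =>
      funext x
      simp only [physHermite, physP, ih, map_sub, map_mul, aeval_X, aeval_C]
      rw [Polynomial.deriv_aeval]
      norm_num

lemma derivative_physP (n : ℕ) :
    derivative (physP (n + 1)) = C (2 * (n + 1) : ℝ) * physP n := by
  induction n with
  | zero => norm_num [physP]
  | succ n ih =>
      rw [show physP (n + 1 + 1) = C 2 * X * physP (n + 1) - derivative (physP (n + 1)) from rfl,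
        show physP (n + 1) = C 2 * X * physP n - derivative (physP n) from rfl] at *
      rw [derivative_sub, derivative_mul, derivative_mul, derivative_C, derivative_X, ih,
        derivative_mul, derivative_C]
      push_cast
      simp only [map_mul, map_add, map_one, map_ofNat]
      ring

lemma integrable_poly_gaussian (Q : Polynomial ℝ) :
    Integrable (fun x : ℝ => aeval x Q * Real.exp (-x ^ 2)) := by
  induction Q using Polynomial.induction_on' with
  | add p q hp hq => simpa [add_mul, Pi.add_def] using hp.add hq
  | monomial k a =>
      have h := integrable_rpow_mul_exp_neg_mul_sq (b := 1) one_pos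
        (s := (k : ℝ)) (lt_of_lt_of_le neg_one_lt_zero (Nat.cast_nonneg k))
      simp only [rpow_natCast, neg_mul, one_mul] at h
      simpa [aeval_monomial, mul_assoc] using h.const_mul a

lemma integral_poly_deriv_gaussian (R : Polynomial ℝ) :
    ∫ q : ℝ, aeval q (derivative R - C 2 * X * R) * Real.exp (-q ^ 2) = 0 := by
  apply MeasureTheory.integral_eq_zero_of_hasDerivAt_of_integrable
    (f := fun q : ℝ => aeval q R * Real.exp (-q ^ 2))
  · intro x
    have h1 : HasDerivAt (fun q : ℝ => aeval q R) (aeval x (derivative R)) x :=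
      R.hasDerivAt_aeval x
    have h2 : HasDerivAt (fun q : ℝ => Real.exp (-q ^ 2)) (-(2 * x) * Real.exp (-x ^ 2)) x := by
      have : HasDerivAt (fun q : ℝ => -q ^ 2) (-(2 * x)) x := by
        exact (hasDerivAt_pow 2 x).neg.congr_deriv (by norm_num)
      convert this.exp using 1; ring
    have : HasDerivAt (fun q : ℝ => aeval q R * Real.exp (-q ^ 2)) _ x := h1.mul h2
    refine this.congr_deriv ?_
    simp only [map_sub, map_mul, aeval_X, aeval_C, Algebra.algebraMap_self, RingHom.id_apply]
    ring
  · exact integrable_poly_gaussian _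
  · exact integrable_poly_gaussian _

theorem hermite_normalization' (n : ℕ) :
    ∫ q : ℝ, Real.exp (-q ^ 2) * (aeval q (physP n)) ^ 2
      = 2 ^ n * n.factorial * Real.sqrt π := by
  induction n with
  | zero =>
      simpa [physP] using integral_gaussian 1
  | succ n ih =>
      have key := integral_poly_deriv_gaussian (physP (n + 1) * physP n)
      have hQ : derivative (physP (n + 1) * physP n) - C 2 * X * (physP (n + 1) * physP n)
          = C (2 * (n + 1) : ℝ) * (physP n) ^ 2 - (physP (n + 1)) ^ 2 := by
        rw [derivative_mul, derivative_physP,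
          show physP (n + 1) = C 2 * X * physP n - derivative (physP n) from rfl]
        ring
      rw [hQ] at key
      have e1 : ∀ q : ℝ, aeval q (C (2 * (n + 1) : ℝ) * (physP n) ^ 2 - (physP (n + 1)) ^ 2)
            * Real.exp (-q ^ 2)
          = (2 * (n + 1) : ℝ) * (Real.exp (-q ^ 2) * (aeval q (physP n)) ^ 2)
            - Real.exp (-q ^ 2) * (aeval q (physP (n + 1))) ^ 2 := by
        intro q
        simp only [map_sub, map_mul, map_pow, aeval_C, Algebra.algebraMap_self, RingHom.id_apply]
        ring
      simp only [e1] at key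
      have i1 : Integrable (fun q : ℝ => Real.exp (-q ^ 2) * (aeval q (physP n)) ^ 2) := by
        have := integrable_poly_gaussian ((physP n) ^ 2)
        simp only [map_pow] at this
        simpa [mul_comm] using this
      have i2 : Integrable (fun q : ℝ => Real.exp (-q ^ 2) * (aeval q (physP (n + 1))) ^ 2) := by
        have := integrable_poly_gaussian ((physP (n + 1)) ^ 2)
        simp only [map_pow] at this
        simpa [mul_comm] using this
      rw [MeasureTheory.integral_sub (i1.const_mul _) i2,
        MeasureTheory.integral_const_mul, ih, sub_eq_zero] at key
      rw [← key]
      push_cast [Nat.factorial_succ]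
      ring

/-- Equation (144): the normalization integral of the Hermite polynomials. -/
theorem hermite_normalization (n : ℕ) :
    ∫ q : ℝ, Real.exp (-q ^ 2) * physHermite n q ^ 2 = 2 ^ n * n.factorial * Real.sqrt π := by
  simp only [physHermite_eq]
  exact hermite_normalization' n
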